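/- The compression capacity of the model (01;2,1;f) equals log_3 6. That is, the supremum, over all positive integers k and all admissible k-shot codes (φ1, φ2), of the rate k / max(⌈log|Im φ1| / 2⌉, ⌈log|Im φ2|⌉) equals log_3 6. -/

import Mathlib

/-!
Statement 8: The compression capacity of the model (01;2,1;f), where encoder 1 observes both
sources, encoder 2 observes only y, the channel capacities are C1 = 2 and C2 = 1, and the
target function is the binary arithmetic sum f(x,y) = x + y, equals log_3 6.
Encoders are maps with finite image; WLOG into ℕ.
-/

/-- The componentwise integer sum of two binary vectors. -/
def vsum {k : ℕ} (x y : Fin k → Fin 2) : Fin k → ℕ := fun i => (x i : ℕ) + (y i : ℕ)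

/-- The cardinality of the image of an encoding map defined on `A^k × A^k`. -/
def imCard1 {k : ℕ} (φ : (Fin k → Fin 2) × (Fin k → Fin 2) → ℕ) : ℕ :=
  (Finset.univ.image φ).card

/-- The cardinality of the image of an encoding map defined on `A^k`. -/
def imCard2 {k : ℕ} (φ : (Fin k → Fin 2) → ℕ) : ℕ := (Finset.univ.image φ).card

/-- Admissibility for the model (01;C1,C2;f): there is a decoder that recovers `x + y`
with zero error from the encoder outputs `φ1 (x, y)` and `φ2 y`. -/
def Admissible01 {k : ℕ} (φ1 : (Fin k → Fin 2) × (Fin k → Fin 2) → ℕ)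
    (φ2 : (Fin k → Fin 2) → ℕ) : Prop :=
  ∃ ψ : ℕ → ℕ → (Fin k → ℕ), ∀ x y : Fin k → Fin 2, ψ (φ1 (x, y)) (φ2 y) = vsum x y

/-- The rate of a k-shot code for (01;2,1;f): `k / max(⌈log|Im φ1| / 2⌉, ⌈log|Im φ2|⌉)`,
logarithms in base 2. -/
noncomputable def rate0121 {k : ℕ} (φ1 : (Fin k → Fin 2) × (Fin k → Fin 2) → ℕ)
    (φ2 : (Fin k → Fin 2) → ℕ) : ℝ :=
  (k : ℝ) /
    ((max ⌈Real.logb 2 (imCard1 φ1) / 2⌉ ⌈Real.logb 2 (imCard2 φ2)⌉ : ℤ) : ℝ)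


open Real

noncomputable def cc : ℝ := Real.logb 2 3 - 1

lemma cc_pos : 0 < cc := by
  have h : (1:ℝ) < Real.logb 2 3 := by
    have := Real.logb_lt_logb (b := 2) (by norm_num : (1:ℝ) < 2) (by norm_num : (0:ℝ) < 2) (by norm_num : (2:ℝ) < 3)
    simpa using this
  unfold cc; linarith

lemma cc_lt_one : cc < 1 := by
  have h : Real.logb 2 3 < 2 := by
    have := Real.logb_lt_logb (b := 2) (by norm_num : (1:ℝ) < 2) (by norm_num : (0:ℝ) < 3) (by norm_num : (3:ℝ) < 4)
    calc Real.logb 2 3 < Real.logb 2 4 := this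
      _ = 2 := by
        rw [show (4:ℝ) = 2^(2:ℕ) by norm_num, Real.logb_pow]; simp [Real.logb_self_eq_one]
  unfold cc; linarith

lemma two_rpow_cc : (2:ℝ) ^ cc = 3/2 := by
  unfold cc
  rw [Real.rpow_sub (by norm_num), Real.rpow_logb (by norm_num) (by norm_num) (by norm_num), Real.rpow_one]

lemma jensen_half {p q : ℝ} (hp : 0 ≤ p) (hq : 0 ≤ q) (hpq : p + q = 1) :
    p ^ (1 - cc) + q ^ (1 - cc) ≤ 3/2 := by
  have hγ0 : (0:ℝ) ≤ 1 - cc := by linarith [cc_lt_one]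
  have hγ1 : 1 - cc ≤ 1 := by linarith [cc_pos]
  have hc := (Real.concaveOn_rpow hγ0 hγ1).2 (Set.mem_Ici.2 hp) (Set.mem_Ici.2 hq)
    (by norm_num : (0:ℝ) ≤ 1/2) (by norm_num : (0:ℝ) ≤ 1/2) (by norm_num)
  simp only [smul_eq_mul] at hc
  have hhalf : ((1:ℝ)/2 * p + 1/2 * q) = 1/2 := by linarith
  rw [hhalf] at hc
  have h2 : ((1:ℝ)/2) ^ (1 - cc) = 3/4 := by
    have : ((1:ℝ)/2) = 2 ^ (-(1:ℝ)) := by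
      rw [Real.rpow_neg (by norm_num), Real.rpow_one]; norm_num
    rw [this, ← Real.rpow_mul (by norm_num : (0:ℝ) ≤ 2),
      show (-1)*(1-cc) = cc - 1 by ring, Real.rpow_sub (by norm_num), Real.rpow_one, two_rpow_cc]
    norm_num
  rw [h2] at hc
  linarith


lemma rpow_split {x s : ℝ} (hx : 0 < x) (hs : 0 < s) :
    x ^ cc * (x/s) ^ (1-cc) = x * s ^ (cc - 1) := by
  rw [Real.div_rpow hx.le hs.le]
  rw [Real.rpow_sub hs cc 1, Real.rpow_one]
  rw [mul_div_assoc', mul_div_assoc', div_eq_div_iff (by positivity) (by positivity),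
    ← Real.rpow_add hx]
  rw [mul_assoc, ← Real.rpow_add hs]
  norm_num

lemma key_ineq {x y : ℝ} (hy : 0 ≤ y) (hxy : y ≤ x) :
    2 * (x + y) ^ cc ≤ 2 * x ^ cc + y ^ cc := by
  rcases eq_or_lt_of_le hy with h0 | hy'
  · rw [← h0, add_zero, Real.zero_rpow cc_pos.ne']; linarith
  have hx : 0 < x := lt_of_lt_of_le hy' hxy
  have hs : 0 < x + y := by linarith
  have hpq : x/(x+y) + y/(x+y) = 1 := by field_simp
  have h3 : (x+y) ^ cc = x ^ cc * (x/(x+y)) ^ (1-cc) + y ^ cc * (y/(x+y)) ^ (1-cc) := by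
    rw [rpow_split hx hs, rpow_split hy' hs]
    rw [show x * (x+y)^(cc-1) + y * (x+y)^(cc-1) = (x+y) * (x+y)^(cc-1) by ring]
    rw [← Real.rpow_one_add' hs.le (by simpa using cc_pos.ne' : 1 + (cc-1) ≠ 0)]
    norm_num
  set P := (x/(x+y)) ^ (1-cc) with hPdef
  set Q := (y/(x+y)) ^ (1-cc) with hQdef
  have hγ0 : (0:ℝ) ≤ 1 - cc := by linarith [cc_lt_one]
  have hP1 : P ≤ 1 := Real.rpow_le_one (by positivity) (by
    rw [div_le_one hs]; linarith) hγ0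
  have hQ0 : 0 ≤ Q := Real.rpow_nonneg (by positivity) _
  have hxc0 : (0:ℝ) ≤ x ^ cc := Real.rpow_nonneg hx.le _
  have hyc0 : (0:ℝ) ≤ y ^ cc := Real.rpow_nonneg hy _
  have hyx : y ^ cc ≤ x ^ cc := Real.rpow_le_rpow hy hxy cc_pos.le
  have hJ : P + Q ≤ 3/2 := jensen_half (by positivity) (by positivity) hpq
  rw [h3]
  rcases le_or_gt (2*Q) 1 with hq | hq
  · nlinarith
  · nlinarith [mul_nonneg (sub_nonneg.2 hyx) (by linarith : (0:ℝ) ≤ 2*Q - 1),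
      mul_nonneg hxc0 (by linarith : (0:ℝ) ≤ 3 - 2*P - 2*Q)]

/-- sumset -/
def SB {k : ℕ} (B : Finset (Fin k → Fin 2)) : Finset (Fin k → ℕ) :=
  (Finset.univ ×ˢ B).image fun p => vsum p.1 p.2

lemma mem_SB {k : ℕ} {B : Finset (Fin k → Fin 2)} {z : Fin k → ℕ} :
    z ∈ SB B ↔ ∃ x y, y ∈ B ∧ vsum x y = z := by
  simp [SB, Finset.mem_image, Finset.mem_product]

lemma vsum_cons {k : ℕ} (a b : Fin 2) (x y : Fin k → Fin 2) :
    vsum (Fin.cons a x) (Fin.cons b y) = Fin.cons ((a:ℕ)+(b:ℕ)) (vsum x y) := by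
  funext i
  refine Fin.cases ?_ ?_ i <;> simp [vsum]

/-- the two slices of B -/
def bslice {k : ℕ} (B : Finset (Fin (k+1) → Fin 2)) (a : Fin 2) : Finset (Fin k → Fin 2) :=
  Finset.univ.filter (fun v => Fin.cons a v ∈ B)

lemma filter_card_eq_bslice {k : ℕ} (B : Finset (Fin (k+1) → Fin 2)) (a : Fin 2) :
    (B.filter (fun w => w 0 = a)).card = (bslice B a).card := by
  apply Finset.card_bij' (i := fun w _ => Fin.tail w) (j := fun v _ => Fin.cons a v)
  case hi =>
    intro w hw
    simp only [Finset.mem_filter] at hw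
    simp only [bslice, Finset.mem_filter, Finset.mem_univ, true_and]
    rw [← hw.2, Fin.cons_self_tail]
    exact hw.1
  case hj =>
    intro v hv
    simp only [bslice, Finset.mem_filter, Finset.mem_univ, true_and] at hv
    simp [hv]
  case left_inv =>
    intro w hw
    simp only [Finset.mem_filter] at hw
    rw [← hw.2, Fin.cons_self_tail]
  case right_inv =>
    intro v hv
    simp

lemma card_bslices {k : ℕ} (B : Finset (Fin (k+1) → Fin 2)) :
    B.card = (bslice B 0).card + (bslice B 1).card := by
  have h := Finset.card_eq_sum_card_fiberwise
    (f := fun w : Fin (k+1) → Fin 2 => w 0) (s := B) (t := Finset.univ)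
    (fun x _ => Finset.mem_univ _)
  rw [h, Fin.sum_univ_two, filter_card_eq_bslice, filter_card_eq_bslice]

lemma fin2_cases (t : Fin 2) : t = 0 ∨ t = 1 := by omega

lemma mem_bslice {k : ℕ} {B : Finset (Fin (k+1) → Fin 2)} {a : Fin 2} {v : Fin k → Fin 2} :
    v ∈ bslice B a ↔ Fin.cons a v ∈ B := by
  simp [bslice]

lemma SB_image_decomp {k : ℕ} (B : Finset (Fin (k+1) → Fin 2)) :
    (SB B).image (fun z => (z 0, Fin.tail z)) =
      ({0} ×ˢ SB (bslice B 0)) ∪ ({1} ×ˢ (SB (bslice B 0) ∪ SB (bslice B 1)))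
        ∪ ({2} ×ˢ SB (bslice B 1)) := by
  ext ⟨m, z'⟩
  simp only [Finset.mem_image, Finset.mem_union, Finset.mem_product, Finset.mem_singleton]
  constructor
  · rintro ⟨z, hz, hF⟩
    obtain ⟨x, y, hyB, rfl⟩ := mem_SB.1 hz
    have hm : vsum x y 0 = m := congrArg Prod.fst hF
    have ht : Fin.tail (vsum x y) = z' := congrArg Prod.snd hF
    have hxy : vsum x y = Fin.cons ((x 0 : ℕ) + (y 0 : ℕ)) (vsum (Fin.tail x) (Fin.tail y)) := by
      conv_lhs => rw [← Fin.cons_self_tail x, ← Fin.cons_self_tail y, vsum_cons]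
    rw [hxy] at hm ht
    simp only [Fin.cons_zero] at hm
    rw [Fin.tail_cons] at ht
    have hyb : Fin.tail y ∈ bslice B (y 0) := by
      rw [mem_bslice, Fin.cons_self_tail]; exact hyB
    have hmem0 : y 0 = 0 → z' ∈ SB (bslice B 0) := fun h =>
      mem_SB.2 ⟨Fin.tail x, Fin.tail y, h ▸ hyb, ht⟩
    have hmem1 : y 0 = 1 → z' ∈ SB (bslice B 1) := fun h =>
      mem_SB.2 ⟨Fin.tail x, Fin.tail y, h ▸ hyb, ht⟩
    rcases fin2_cases (x 0) with h1 | h1 <;> rcases fin2_cases (y 0) with h2 | h2 <;>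
      rw [h1, h2] at hm <;> simp only [Fin.val_zero, Fin.val_one] at hm
    · exact Or.inl (Or.inl ⟨hm.symm, hmem0 h2⟩)
    · exact Or.inl (Or.inr ⟨hm.symm, Or.inr (hmem1 h2)⟩)
    · exact Or.inl (Or.inr ⟨hm.symm, Or.inl (hmem0 h2)⟩)
    · exact Or.inr ⟨hm.symm, hmem1 h2⟩
  · have key : ∀ (a b : Fin 2), z' ∈ SB (bslice B b) → m = (a:ℕ) + (b:ℕ) →
        ∃ z ∈ SB B, (z 0, Fin.tail z) = (m, z') := by
      intro a b hz' hm
      obtain ⟨x', y', hy', hv⟩ := mem_SB.1 hz'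
      refine ⟨vsum (Fin.cons a x') (Fin.cons b y'),
        mem_SB.2 ⟨_, _, mem_bslice.1 hy', rfl⟩, ?_⟩
      rw [vsum_cons]
      simp [Fin.tail_cons, hv, hm]
    rintro ((⟨hm, hz'⟩ | ⟨hm, hz'⟩) | ⟨hm, hz'⟩)
    · exact key 0 0 hz' (by simp [hm])
    · rcases hz' with hz' | hz'
      · exact key 1 0 hz' (by simp [hm])
      · exact key 0 1 hz' (by simp [hm])
    · exact key 1 1 hz' (by simp [hm])

lemma card_SB_decomp {k : ℕ} (B : Finset (Fin (k+1) → Fin 2)) :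
    (SB B).card = (SB (bslice B 0)).card + (SB (bslice B 0) ∪ SB (bslice B 1)).card
      + (SB (bslice B 1)).card := by
  have hinj : Function.Injective (fun z : Fin (k+1) → ℕ => (z 0, Fin.tail z)) := by
    intro z w h
    have h1 : z 0 = w 0 := congrArg Prod.fst h
    have h2 : Fin.tail z = Fin.tail w := congrArg Prod.snd h
    rw [← Fin.cons_self_tail z, ← Fin.cons_self_tail w, h1, h2]
  have d1 : Disjoint ({(0:ℕ)} ×ˢ SB (bslice B 0))
      ({(1:ℕ)} ×ˢ (SB (bslice B 0) ∪ SB (bslice B 1))) := by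
    rw [Finset.disjoint_left]
    rintro ⟨m, z⟩ h h2
    simp only [Finset.mem_product, Finset.mem_singleton] at h h2
    exact absurd (h.1.symm.trans h2.1) (by norm_num)
  have d2 : Disjoint (({(0:ℕ)} ×ˢ SB (bslice B 0))
      ∪ ({(1:ℕ)} ×ˢ (SB (bslice B 0) ∪ SB (bslice B 1)))) ({(2:ℕ)} ×ˢ SB (bslice B 1)) := by
    rw [Finset.disjoint_left]
    rintro ⟨m, z⟩ h h2
    simp only [Finset.mem_union, Finset.mem_product, Finset.mem_singleton] at h h2
    rcases h with h | h <;> exact absurd (h.1.symm.trans h2.1) (by norm_num)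
  rw [← Finset.card_image_of_injective _ hinj, SB_image_decomp]
  rw [Finset.card_union_of_disjoint d2, Finset.card_union_of_disjoint d1]
  simp only [Finset.card_product, Finset.card_singleton, one_mul]

lemma SB_card_bound : ∀ (k : ℕ) (B : Finset (Fin k → Fin 2)),
    (2:ℝ)^k * (B.card : ℝ) ^ cc ≤ ((SB B).card : ℝ) := by
  intro k
  induction k with
  | zero =>
    intro B
    rcases B.eq_empty_or_nonempty with rfl | hB
    · simp [SB, Real.zero_rpow cc_pos.ne']
    · have hc1 : B.card = 1 := by
        have h1 : B.card ≤ 1 := by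
          have := Finset.card_le_univ B
          simpa using this
        have h2 : 1 ≤ B.card := hB.card_pos
        omega
      have hSB : 1 ≤ (SB B).card := by
        obtain ⟨y, hy⟩ := hB
        have : vsum y y ∈ SB B := mem_SB.2 ⟨y, y, hy, rfl⟩
        exact Finset.card_pos.2 ⟨_, this⟩
      rw [hc1]
      simp only [pow_zero, Nat.cast_one, Real.one_rpow, one_mul]
      exact_mod_cast hSB
  | succ k ih =>
    intro B
    have h0 := ih (bslice B 0)
    have h1 := ih (bslice B 1)
    have hu0 : ((SB (bslice B 0)).card : ℝ) ≤ ((SB (bslice B 0) ∪ SB (bslice B 1)).card : ℝ) := by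
      exact_mod_cast Finset.card_le_card Finset.subset_union_left
    have hu1 : ((SB (bslice B 1)).card : ℝ) ≤ ((SB (bslice B 0) ∪ SB (bslice B 1)).card : ℝ) := by
      exact_mod_cast Finset.card_le_card Finset.subset_union_right
    have hcard : (B.card : ℝ) = ((bslice B 0).card : ℝ) + ((bslice B 1).card : ℝ) := by
      rw [card_bslices B]; push_cast; ring
    have hdec : ((SB B).card : ℝ) = ((SB (bslice B 0)).card : ℝ)
        + ((SB (bslice B 0) ∪ SB (bslice B 1)).card : ℝ) + ((SB (bslice B 1)).card : ℝ) := by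
      rw [card_SB_decomp B]; push_cast; ring
    have hpow : (0:ℝ) ≤ 2^k := by positivity
    rw [hcard, hdec]
    rcases le_total ((bslice B 1).card : ℝ) ((bslice B 0).card : ℝ) with hle | hle
    · have key := key_ineq (x := ((bslice B 0).card : ℝ)) (y := ((bslice B 1).card : ℝ))
        (by positivity) hle
      have := mul_le_mul_of_nonneg_left key hpow
      rw [pow_succ]
      nlinarith
    · have key := key_ineq (x := ((bslice B 1).card : ℝ)) (y := ((bslice B 0).card : ℝ))
        (by positivity) hle
      have := mul_le_mul_of_nonneg_left key hpow
      rw [pow_succ]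
      rw [show ((bslice B 0).card : ℝ) + ((bslice B 1).card : ℝ)
        = ((bslice B 1).card : ℝ) + ((bslice B 0).card : ℝ) by ring]
      nlinarith

lemma logb36 : Real.logb 3 6 = (1 + Real.logb 2 3) / Real.logb 2 3 := by
  unfold Real.logb
  have h2 : Real.log 2 ≠ 0 := ne_of_gt (Real.log_pos (by norm_num))
  have h3 : Real.log 3 ≠ 0 := ne_of_gt (Real.log_pos (by norm_num))
  have h6 : Real.log 6 = Real.log 2 + Real.log 3 := by
    rw [show (6:ℝ) = 2 * 3 by norm_num, Real.log_mul (by norm_num) (by norm_num)]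
  rw [h6]
  field_simp

lemma one_le_logb36 : (1:ℝ) ≤ Real.logb 3 6 := by
  rw [show (1:ℝ) = Real.logb 3 3 by simp [Real.logb_self_eq_one]]
  exact Real.logb_le_logb_of_le (by norm_num) (by norm_num) (by norm_num)

lemma converse {k : ℕ} (hk : 0 < k) (φ1 : (Fin k → Fin 2) × (Fin k → Fin 2) → ℕ)
    (φ2 : (Fin k → Fin 2) → ℕ) (hadm : Admissible01 φ1 φ2) :
    rate0121 φ1 φ2 ≤ Real.logb 3 6 := by
  obtain ⟨ψ, hψ⟩ := hadm
  set m : ℤ := max ⌈Real.logb 2 (imCard1 φ1) / 2⌉ ⌈Real.logb 2 (imCard2 φ2)⌉ with hm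
  have hrate : rate0121 φ1 φ2 = (k:ℝ) / (m:ℝ) := rfl
  rcases le_or_gt m 0 with hm0 | hm0
  · -- nonpositive m
    rw [hrate]
    have : (m:ℝ) ≤ 0 := by exact_mod_cast hm0
    have hr : (k:ℝ) / (m:ℝ) ≤ 0 := div_nonpos_of_nonneg_of_nonpos (by positivity) this
    linarith [one_le_logb36]
  rcases le_or_gt (k:ℤ) m with hkm | hkm
  · -- m ≥ k, rate ≤ 1
    rw [hrate]
    have hmr : (0:ℝ) < (m:ℝ) := by exact_mod_cast hm0
    have : (k:ℝ) ≤ (m:ℝ) := by exact_mod_cast hkm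
    calc (k:ℝ)/(m:ℝ) ≤ 1 := by rw [div_le_one hmr]; exact this
      _ ≤ _ := one_le_logb36
  -- main case: 0 < m < k
  have hN1pos : 0 < imCard1 φ1 := Finset.card_pos.2 (Finset.Nonempty.image ⟨_, Finset.mem_univ (fun _ => 0, fun _ => 0)⟩ φ1)
  have hN2pos : 0 < imCard2 φ2 := Finset.card_pos.2 (Finset.Nonempty.image ⟨_, Finset.mem_univ (fun _ => 0)⟩ φ2)
  have hN1 : (imCard1 φ1 : ℝ) ≤ (2:ℝ) ^ (2*(m:ℝ)) := by
    have h1 : (⌈Real.logb 2 (imCard1 φ1) / 2⌉ : ℤ) ≤ m := le_max_left _ _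
    have h2 : Real.logb 2 (imCard1 φ1) / 2 ≤ (m:ℝ) := by
      exact_mod_cast Int.ceil_le.1 h1
    have h3 : Real.logb 2 (imCard1 φ1) ≤ 2*(m:ℝ) := by linarith
    calc (imCard1 φ1 : ℝ) = (2:ℝ) ^ Real.logb 2 (imCard1 φ1) :=
          (Real.rpow_logb (by norm_num) (by norm_num) (by exact_mod_cast hN1pos)).symm
      _ ≤ (2:ℝ) ^ (2*(m:ℝ)) := by
          exact Real.rpow_le_rpow_of_exponent_le (by norm_num) h3
  have hN2 : (imCard2 φ2 : ℝ) ≤ (2:ℝ) ^ ((m:ℝ)) := by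
    have h1 : (⌈Real.logb 2 (imCard2 φ2)⌉ : ℤ) ≤ m := le_max_right _ _
    have h2 : Real.logb 2 (imCard2 φ2) ≤ (m:ℝ) := by exact_mod_cast Int.ceil_le.1 h1
    calc (imCard2 φ2 : ℝ) = (2:ℝ) ^ Real.logb 2 (imCard2 φ2) :=
          (Real.rpow_logb (by norm_num) (by norm_num) (by exact_mod_cast hN2pos)).symm
      _ ≤ (2:ℝ) ^ ((m:ℝ)) := Real.rpow_le_rpow_of_exponent_le (by norm_num) h2
  -- pigeonhole: a large fiber of φ2
  have hcardsum : ∑ t ∈ Finset.univ.image φ2, (Finset.univ.filter (fun y => φ2 y = t)).card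
      = 2^k := by
    rw [← Finset.card_eq_sum_card_fiberwise (fun x _ => Finset.mem_image_of_mem φ2 (Finset.mem_univ x))]
    simp [Fintype.card_fun]
  obtain ⟨t0, ht0, hmax⟩ := Finset.exists_max_image (Finset.univ.image φ2)
    (fun t => (Finset.univ.filter (fun y => φ2 y = t)).card)
    ⟨_, Finset.mem_image_of_mem φ2 (Finset.mem_univ (fun _ => 0))⟩
  set B : Finset (Fin k → Fin 2) := Finset.univ.filter (fun y => φ2 y = t0) with hBdef
  have hBbig : 2^k ≤ (imCard2 φ2) * B.card := by
    rw [← hcardsum]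
    calc ∑ t ∈ Finset.univ.image φ2, (Finset.univ.filter (fun y => φ2 y = t)).card
        ≤ (Finset.univ.image φ2).card * B.card := by
          apply Finset.sum_le_card_nsmul
          intro t ht
          exact hmax t ht
      _ = (imCard2 φ2) * B.card := rfl
  -- injection from SB B into image of φ1
  have hSBN1 : (SB B).card ≤ imCard1 φ1 := by
    classical
    apply Finset.card_le_card_of_injOn
      (fun z => if h : ∃ p : (Fin k → Fin 2) × (Fin k → Fin 2), p.2 ∈ B ∧ vsum p.1 p.2 = z
        then φ1 h.choose else 0)
    · intro z hz
      obtain ⟨x, y, hyB, hv⟩ := mem_SB.1 hz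
      have hex : ∃ p : (Fin k → Fin 2) × (Fin k → Fin 2), p.2 ∈ B ∧ vsum p.1 p.2 = z :=
        ⟨(x, y), hyB, hv⟩
      simp only [dif_pos hex]
      exact Finset.mem_image_of_mem φ1 (Finset.mem_univ _)
    · intro z hz z' hz' hff
      obtain ⟨x, y, hyB, hv⟩ := mem_SB.1 hz
      obtain ⟨x', y', hyB', hv'⟩ := mem_SB.1 hz'
      have hex : ∃ p : (Fin k → Fin 2) × (Fin k → Fin 2), p.2 ∈ B ∧ vsum p.1 p.2 = z :=
        ⟨(x, y), hyB, hv⟩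
      have hex' : ∃ p : (Fin k → Fin 2) × (Fin k → Fin 2), p.2 ∈ B ∧ vsum p.1 p.2 = z' :=
        ⟨(x', y'), hyB', hv'⟩
      dsimp only at hff
      rw [dif_pos hex, dif_pos hex'] at hff
      obtain ⟨hB1, hv1⟩ := hex.choose_spec
      obtain ⟨hB2, hv2⟩ := hex'.choose_spec
      have hφ2eq : φ2 hex.choose.2 = φ2 hex'.choose.2 := by
        have e1 : φ2 hex.choose.2 = t0 := (Finset.mem_filter.1 hB1).2
        have e2 : φ2 hex'.choose.2 = t0 := (Finset.mem_filter.1 hB2).2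
        rw [e1, e2]
      calc z = vsum hex.choose.1 hex.choose.2 := hv1.symm
        _ = ψ (φ1 (hex.choose.1, hex.choose.2)) (φ2 hex.choose.2) := (hψ _ _).symm
        _ = ψ (φ1 hex.choose) (φ2 hex.choose.2) := by rw [Prod.mk.eta]
        _ = ψ (φ1 hex'.choose) (φ2 hex'.choose.2) := by rw [hff, hφ2eq]
        _ = ψ (φ1 (hex'.choose.1, hex'.choose.2)) (φ2 hex'.choose.2) := by rw [Prod.mk.eta]
        _ = vsum hex'.choose.1 hex'.choose.2 := hψ _ _
        _ = z' := hv2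
  -- now the chain of real inequalities
  have hMpos : (0:ℝ) < (m:ℝ) := by exact_mod_cast hm0
  have hMk : (m:ℝ) < (k:ℝ) := by exact_mod_cast hkm
  have hBlow : (2:ℝ) ^ ((k:ℝ) - (m:ℝ)) ≤ (B.card : ℝ) := by
    have h1 : (2:ℝ) ^ ((k:ℝ)) ≤ (2:ℝ)^((m:ℝ)) * (B.card : ℝ) := by
      have : ((2^k : ℕ) : ℝ) ≤ ((imCard2 φ2 : ℕ) : ℝ) * (B.card : ℝ) := by
        exact_mod_cast hBbig
      calc (2:ℝ) ^ ((k:ℝ)) = ((2^k : ℕ) : ℝ) := by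
            rw [Real.rpow_natCast]; push_cast; ring
        _ ≤ ((imCard2 φ2 : ℕ) : ℝ) * (B.card : ℝ) := this
        _ ≤ (2:ℝ)^((m:ℝ)) * (B.card : ℝ) := by
            apply mul_le_mul_of_nonneg_right hN2 (by positivity)
    have h2 : (0:ℝ) < (2:ℝ)^((m:ℝ)) := by positivity
    rw [Real.rpow_sub (by norm_num), div_le_iff₀ h2]
    calc (2:ℝ)^((k:ℝ)) ≤ (2:ℝ)^((m:ℝ)) * (B.card:ℝ) := h1
      _ = (B.card:ℝ) * (2:ℝ)^((m:ℝ)) := by ring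
  have hchain : (2:ℝ) ^ ((k:ℝ) + ((k:ℝ) - (m:ℝ)) * cc) ≤ (2:ℝ) ^ (2*(m:ℝ)) := by
    calc (2:ℝ) ^ ((k:ℝ) + ((k:ℝ) - (m:ℝ)) * cc)
        = (2:ℝ) ^ ((k:ℝ)) * ((2:ℝ) ^ ((k:ℝ) - (m:ℝ))) ^ cc := by
          rw [Real.rpow_add (by norm_num : (0:ℝ) < 2), Real.rpow_mul (by norm_num : (0:ℝ) ≤ 2)]
      _ ≤ (2:ℝ) ^ ((k:ℝ)) * (B.card : ℝ) ^ cc := by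
          apply mul_le_mul_of_nonneg_left _ (by positivity)
          exact Real.rpow_le_rpow (by positivity) hBlow cc_pos.le
      _ ≤ ((SB B).card : ℝ) := by
          have hsb := SB_card_bound k B
          rwa [← Real.rpow_natCast 2 k] at hsb
      _ ≤ (imCard1 φ1 : ℝ) := by exact_mod_cast hSBN1
      _ ≤ (2:ℝ) ^ (2*(m:ℝ)) := hN1
  have hexp : (k:ℝ) + ((k:ℝ) - (m:ℝ)) * cc ≤ 2*(m:ℝ) :=
    (Real.rpow_le_rpow_left_iff (by norm_num : (1:ℝ) < 2)).1 hchain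
  -- conclude
  rw [hrate, logb36]
  have hccval : cc = Real.logb 2 3 - 1 := rfl
  have hL : (0:ℝ) < Real.logb 2 3 := by have := cc_pos; rw [hccval] at this; linarith
  rw [div_le_div_iff₀ hMpos hL]
  have hexp' : (k:ℝ) + ((k:ℝ) - (m:ℝ)) * (Real.logb 2 3 - 1) ≤ 2*(m:ℝ) := by
    rw [← hccval]; exact hexp
  nlinarith [hexp']

section Ach
variable {n k : ℕ}

/-- the head restriction -/
def restr (hnk : n ≤ k) (y : Fin k → Fin 2) : Fin n → Fin 2 :=
  fun i => y ⟨i.1, lt_of_lt_of_le i.2 hnk⟩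

/-- the tail sums -/
def tpart (hnk : n ≤ k) (x y : Fin k → Fin 2) : Fin (k-n) → Fin 3 :=
  fun j => ⟨(x ⟨n + j.1, by omega⟩ : ℕ) + (y ⟨n + j.1, by omega⟩ : ℕ), by
    have h1 := (x ⟨n + j.1, by omega⟩).2
    have h2 := (y ⟨n + j.1, by omega⟩).2
    omega⟩

lemma achieve_admissible
    (g1 : ((Fin n → Fin 2) × (Fin (k-n) → Fin 3)) → ℕ) (hg1 : Function.Injective g1)
    (g2 : (Fin n → Fin 2) → ℕ) (hg2 : Function.Injective g2) :
    Admissible01 (fun p => g1 (restr hnk p.1, tpart hnk p.1 p.2)) (fun y => g2 (restr hnk y)) := by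
  classical
  refine ⟨fun a b => fun i =>
    if h : i.1 < n then
      ((Function.invFun g1 a).1 ⟨i.1, h⟩ : ℕ) + ((Function.invFun g2 b) ⟨i.1, h⟩ : ℕ)
    else ((Function.invFun g1 a).2 ⟨i.1 - n, by omega⟩ : ℕ), ?_⟩
  intro x y
  funext i
  have e1 : Function.invFun g1 (g1 (restr hnk x, tpart hnk x y)) = (restr hnk x, tpart hnk x y) :=
    Function.leftInverse_invFun hg1 _
  have e2 : Function.invFun g2 (g2 (restr hnk y)) = restr hnk y :=
    Function.leftInverse_invFun hg2 _
  simp only [e1, e2]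
  by_cases h : i.1 < n
  · rw [dif_pos h]
    show ((restr hnk x) ⟨i.1, h⟩ : ℕ) + ((restr hnk y) ⟨i.1, h⟩ : ℕ) = _
    unfold restr vsum
    congr 1
  · rw [dif_neg h]
    show ((tpart hnk x y) ⟨i.1 - n, by omega⟩ : ℕ) = _
    unfold tpart vsum
    have hidx : (⟨n + ((i:ℕ) - n), by omega⟩ : Fin k) = i := by
      apply Fin.ext; simp; omega
    show ((x ⟨n + ((i:ℕ) - n), by omega⟩ : ℕ) + (y ⟨n + ((i:ℕ) - n), by omega⟩ : ℕ)) = _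
    rw [hidx]

end Ach

lemma achieve_card1 (hnk : n ≤ k)
    (g1 : ((Fin n → Fin 2) × (Fin (k-n) → Fin 3)) → ℕ) :
    imCard1 (fun p : (Fin k → Fin 2) × (Fin k → Fin 2) =>
      g1 (restr hnk p.1, tpart hnk p.1 p.2)) ≤ 2^n * 3^(k-n) := by
  unfold imCard1
  have he : (Finset.univ.image (fun p : (Fin k → Fin 2) × (Fin k → Fin 2) =>
      g1 (restr hnk p.1, tpart hnk p.1 p.2)))
      = (Finset.univ.image (fun p : (Fin k → Fin 2) × (Fin k → Fin 2) =>
        (restr hnk p.1, tpart hnk p.1 p.2))).image g1 := by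
    rw [Finset.image_image]; rfl
  rw [he]
  calc ((Finset.univ.image fun p : (Fin k → Fin 2) × (Fin k → Fin 2) =>
          (restr hnk p.1, tpart hnk p.1 p.2)).image g1).card
      ≤ (Finset.univ.image fun p : (Fin k → Fin 2) × (Fin k → Fin 2) =>
          (restr hnk p.1, tpart hnk p.1 p.2)).card := Finset.card_image_le
    _ ≤ (Finset.univ : Finset ((Fin n → Fin 2) × (Fin (k-n) → Fin 3))).card := by
        apply Finset.card_le_card (Finset.image_subset_iff.2 (fun p _ => Finset.mem_univ _))
    _ = 2^n * 3^(k-n) := by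
        simp [Fintype.card_prod, Fintype.card_fun]

lemma achieve_card2 (hnk : n ≤ k) (g2 : (Fin n → Fin 2) → ℕ) :
    imCard2 (fun y : Fin k → Fin 2 => g2 (restr hnk y)) ≤ 2^n := by
  unfold imCard2
  have he : (Finset.univ.image (fun y : Fin k → Fin 2 => g2 (restr hnk y)))
      = (Finset.univ.image (fun y : Fin k → Fin 2 => restr hnk y)).image g2 := by
    rw [Finset.image_image]; rfl
  rw [he]
  calc ((Finset.univ.image fun y : Fin k → Fin 2 => restr hnk y).image g2).card
      ≤ (Finset.univ.image fun y : Fin k → Fin 2 => restr hnk y).card := Finset.card_image_le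
    _ ≤ (Finset.univ : Finset (Fin n → Fin 2)).card := by
        apply Finset.card_le_card (Finset.image_subset_iff.2 (fun p _ => Finset.mem_univ _))
    _ = 2^n := by simp [Fintype.card_fun]

lemma achieve_card2_ge (hn : 0 < n) (hnk : n ≤ k)
    (g2 : (Fin n → Fin 2) → ℕ) (hg2 : Function.Injective g2) :
    2 ≤ imCard2 (fun y : Fin k → Fin 2 => g2 (restr hnk y)) := by
  unfold imCard2
  rw [show (2 ≤ (Finset.image (fun y : Fin k → Fin 2 => g2 (restr hnk y)) Finset.univ).card)
    ↔ (1 < (Finset.image (fun y : Fin k → Fin 2 => g2 (restr hnk y)) Finset.univ).card) from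
      Iff.rfl]
  rw [Finset.one_lt_card]
  have hkpos : 0 < k := lt_of_lt_of_le hn hnk
  refine ⟨g2 (restr hnk (fun _ => 0)), Finset.mem_image_of_mem _ (Finset.mem_univ _),
    g2 (restr hnk (fun i => if (i:ℕ) = 0 then 1 else 0)),
    Finset.mem_image_of_mem _ (Finset.mem_univ _), ?_⟩
  intro hcontra
  have := hg2 hcontra
  have h0 := congrFun this ⟨0, hn⟩
  unfold restr at h0
  simp at h0

lemma achieve_rate (hn : 0 < n) (hnk : n ≤ k) (h36 : 3^(k-n) ≤ 2^n)
    (g1 : ((Fin n → Fin 2) × (Fin (k-n) → Fin 3)) → ℕ) (hg1 : Function.Injective g1)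
    (g2 : (Fin n → Fin 2) → ℕ) (hg2 : Function.Injective g2) :
    (k:ℝ)/(n:ℝ) ≤ rate0121 (fun p : (Fin k → Fin 2) × (Fin k → Fin 2) =>
      g1 (restr hnk p.1, tpart hnk p.1 p.2)) (fun y : Fin k → Fin 2 => g2 (restr hnk y)) := by
  set φ1 := fun p : (Fin k → Fin 2) × (Fin k → Fin 2) =>
      g1 (restr hnk p.1, tpart hnk p.1 p.2) with hφ1
  set φ2 := fun y : Fin k → Fin 2 => g2 (restr hnk y) with hφ2
  have hN1pos : 0 < imCard1 φ1 :=
    Finset.card_pos.2 (Finset.Nonempty.image ⟨_, Finset.mem_univ (fun _ => 0, fun _ => 0)⟩ φ1)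
  have hc1 : (⌈Real.logb 2 (imCard1 φ1) / 2⌉ : ℤ) ≤ (n:ℤ) := by
    rw [Int.ceil_le]
    rw [div_le_iff₀ (by norm_num : (0:ℝ) < 2)]
    push_cast
    have hle : (imCard1 φ1 : ℝ) ≤ ((2^(2*n) : ℕ) : ℝ) := by
      have h1 : imCard1 φ1 ≤ 2^n * 3^(k-n) := achieve_card1 hnk g1
      have h2 : 2^n * 3^(k-n) ≤ 2^(2*n) := by
        rw [two_mul, pow_add]
        exact Nat.mul_le_mul_left _ h36
      exact_mod_cast le_trans h1 h2
    have hfin : Real.logb 2 ((2^(2*n) : ℕ) : ℝ) = 2 * (n:ℝ) := by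
      push_cast
      rw [Real.logb_pow]
      simp [Real.logb_self_eq_one]
    have := Real.logb_le_logb_of_le (by norm_num : (1:ℝ) < 2)
      (by exact_mod_cast hN1pos : (0:ℝ) < (imCard1 φ1 : ℝ)) hle
    rw [hfin] at this
    linarith
  have hc2 : (⌈Real.logb 2 (imCard2 φ2)⌉ : ℤ) ≤ (n:ℤ) := by
    rw [Int.ceil_le]
    have hN2pos : 0 < imCard2 φ2 :=
      Finset.card_pos.2 (Finset.Nonempty.image ⟨_, Finset.mem_univ (fun _ => 0)⟩ φ2)
    have hle : (imCard2 φ2 : ℝ) ≤ ((2^n : ℕ) : ℝ) := by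
      exact_mod_cast achieve_card2 hnk g2
    calc Real.logb 2 (imCard2 φ2) ≤ Real.logb 2 ((2^n : ℕ) : ℝ) :=
          Real.logb_le_logb_of_le (by norm_num) (by exact_mod_cast hN2pos) hle
      _ = (n:ℝ) := by
          push_cast
          rw [Real.logb_pow]
          simp [Real.logb_self_eq_one]
  have hc2ge : (1:ℤ) ≤ ⌈Real.logb 2 (imCard2 φ2)⌉ := by
    have h2 : (2:ℝ) ≤ (imCard2 φ2 : ℝ) := by
      exact_mod_cast achieve_card2_ge hn hnk g2 hg2
    have : (1:ℝ) ≤ Real.logb 2 (imCard2 φ2) := by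
      calc (1:ℝ) = Real.logb 2 2 := by simp [Real.logb_self_eq_one]
        _ ≤ _ := Real.logb_le_logb_of_le (by norm_num) (by norm_num) h2
    calc (1:ℤ) = ⌈(1:ℝ)⌉ := by simp
      _ ≤ _ := Int.ceil_le_ceil this
  set m : ℤ := max ⌈Real.logb 2 (imCard1 φ1) / 2⌉ ⌈Real.logb 2 (imCard2 φ2)⌉ with hm
  have hm1 : (1:ℤ) ≤ m := le_trans hc2ge (le_max_right _ _)
  have hmn : m ≤ (n:ℤ) := max_le hc1 hc2
  have hrate : rate0121 φ1 φ2 = (k:ℝ)/(m:ℝ) := rfl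
  rw [hrate]
  have h1 : (0:ℝ) < (m:ℝ) := by exact_mod_cast hm1
  have h2 : (m:ℝ) ≤ (n:ℝ) := by exact_mod_cast hmn
  gcongr

lemma one_le_logb36' : (1:ℝ) ≤ Real.logb 3 6 := by
  rw [show (1:ℝ) = Real.logb 3 3 by simp [Real.logb_self_eq_one]]
  exact Real.logb_le_logb_of_le (by norm_num) (by norm_num) (by norm_num)

lemma achieve_exists (n : ℕ) (hn : 0 < n) :
    ∃ (k : ℕ), 0 < k ∧ ∃ (φ1 : (Fin k → Fin 2) × (Fin k → Fin 2) → ℕ)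
      (φ2 : (Fin k → Fin 2) → ℕ), Admissible01 φ1 φ2 ∧
      Real.logb 3 6 - 1/(n:ℝ) ≤ rate0121 φ1 φ2 := by
  classical
  set k := ⌊(n:ℝ) * Real.logb 3 6⌋₊ with hkdef
  have hnk : n ≤ k := by
    apply Nat.le_floor
    calc ((n:ℕ):ℝ) = (n:ℝ) * 1 := by ring
      _ ≤ (n:ℝ) * Real.logb 3 6 := by
          apply mul_le_mul_of_nonneg_left one_le_logb36' (Nat.cast_nonneg n)
  have hkpos : 0 < k := lt_of_lt_of_le hn hnk
  have h3k6n : (3:ℕ)^k ≤ 6^n := by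
    have hkle : (k:ℝ) ≤ (n:ℝ) * Real.logb 3 6 := Nat.floor_le (mul_nonneg (Nat.cast_nonneg n) (le_trans zero_le_one one_le_logb36'))
    have hr : (3:ℝ)^(k:ℝ) ≤ (6:ℝ)^(n:ℝ) := by
      calc (3:ℝ)^(k:ℝ) ≤ (3:ℝ)^((n:ℝ) * Real.logb 3 6) :=
            Real.rpow_le_rpow_of_exponent_le (by norm_num) hkle
        _ = ((3:ℝ)^(Real.logb 3 6))^(n:ℝ) := by
            rw [mul_comm, Real.rpow_mul (by norm_num : (0:ℝ) ≤ 3)]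
        _ = (6:ℝ)^(n:ℝ) := by
            rw [Real.rpow_logb (by norm_num) (by norm_num) (by norm_num)]
    have h3 : ((3^k : ℕ) : ℝ) ≤ ((6^n : ℕ) : ℝ) := by
      push_cast
      rw [← Real.rpow_natCast 3 k, ← Real.rpow_natCast 6 n]
      exact hr
    exact_mod_cast h3
  have h36 : 3^(k-n) ≤ 2^n := by
    have hsplit : (3:ℕ)^k = 3^n * 3^(k-n) := by
      rw [← pow_add]
      congr 1
      omega
    have h6 : (6:ℕ)^n = 3^n * 2^n := by
      rw [← Nat.mul_pow]
    rw [hsplit, h6] at h3k6n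
    exact Nat.le_of_mul_le_mul_left h3k6n (by positivity)
  obtain ⟨g1, hg1⟩ := Countable.exists_injective_nat
    ((Fin n → Fin 2) × (Fin (k-n) → Fin 3))
  obtain ⟨g2, hg2⟩ := Countable.exists_injective_nat (Fin n → Fin 2)
  refine ⟨k, hkpos, _, _, achieve_admissible (hnk := hnk) g1 hg1 g2 hg2, ?_⟩
  have hrate := achieve_rate hn hnk h36 g1 hg1 g2 hg2
  refine le_trans ?_ hrate
  -- logb 3 6 - 1/n ≤ k/n
  have hklow : (n:ℝ) * Real.logb 3 6 - 1 ≤ (k:ℝ) := by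
    have := Nat.lt_floor_add_one ((n:ℝ) * Real.logb 3 6)
    push_cast at this ⊢
    linarith
  have hnpos : (0:ℝ) < (n:ℝ) := by exact_mod_cast hn
  have h2 : Real.logb 3 6 ≤ ((k:ℝ)+1)/(n:ℝ) := by
    rw [le_div_iff₀ hnpos]
    nlinarith [hklow]
  have h3 : ((k:ℝ)+1)/(n:ℝ) - 1/(n:ℝ) = (k:ℝ)/(n:ℝ) := by
    field_simp
    ring
  linarith [h2, h3]


theorem capacity_01_2_1 :
    sSup {r : ℝ | ∃ (k : ℕ), 0 < k ∧ ∃ (φ1 : (Fin k → Fin 2) × (Fin k → Fin 2) → ℕ)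
      (φ2 : (Fin k → Fin 2) → ℕ),
      Admissible01 φ1 φ2 ∧ r = rate0121 φ1 φ2} = Real.logb 3 6 := by
  set S : Set ℝ := {r : ℝ | ∃ (k : ℕ), 0 < k ∧ ∃ (φ1 : (Fin k → Fin 2) × (Fin k → Fin 2) → ℕ)
      (φ2 : (Fin k → Fin 2) → ℕ),
      Admissible01 φ1 φ2 ∧ r = rate0121 φ1 φ2} with hS
  have hbdd : ∀ r ∈ S, r ≤ Real.logb 3 6 := by
    rintro r ⟨k, hk, φ1, φ2, hadm, rfl⟩
    exact converse hk φ1 φ2 hadm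
  have hne : S.Nonempty := by
    obtain ⟨k, hk, φ1, φ2, hadm, -⟩ := achieve_exists 1 one_pos
    exact ⟨rate0121 φ1 φ2, ⟨k, hk, φ1, φ2, hadm, rfl⟩⟩
  apply le_antisymm
  · exact csSup_le hne hbdd
  · apply le_of_forall_lt
    intro c hc
    obtain ⟨nn, hnn⟩ := exists_nat_one_div_lt (sub_pos.2 hc)
    obtain ⟨k, hk, φ1, φ2, hadm, hge⟩ := achieve_exists (nn+1) (Nat.succ_pos nn)
    have hmem : rate0121 φ1 φ2 ∈ S := ⟨k, hk, φ1, φ2, hadm, rfl⟩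
    have hle := le_csSup ⟨Real.logb 3 6, fun r hr => hbdd r hr⟩ hmem
    push_cast at hge
    calc c < Real.logb 3 6 - 1/((nn:ℝ)+1) := by linarith
      _ ≤ rate0121 φ1 φ2 := hge
      _ ≤ sSup S := hle
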